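/- (L1 approximation error, Lemma 2.1.) Let α ∈ (0,1), τ > 0, t_j = jτ, n ≥ 1, and v ∈ C²[0, t_n]. With a_j^{(α)} = ((j+1)^{1-α} - j^{1-α})/Γ(2-α) and δ_t^α v^n = τ^{-α}[a_0^{(α)} v^n - Σ_{k=1}^{n-1}(a_{n-k-1}^{(α)} - a_{n-k}^{(α)}) v^k - a_{n-1}^{(α)} v^0] (where v^j = v(t_j)), there exists a constant c_α depending only on α such that |₀^C D_t^α v(t_n) - δ_t^α v^n| ≤ c_α · (max_{0 ≤ t ≤ t_n} |v''(t)|) · τ^{2-α}. -/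

import Mathlib

open Real Finset intervalIntegral

section Aux

lemma abel_id (n : ℕ) (hn : 1 ≤ n) (w b : ℕ → ℝ) :
    b 0 * w n - (∑ k ∈ Finset.Ico 1 n, (b (n - k - 1) - b (n - k)) * w k) - b (n - 1) * w 0
      = ∑ k ∈ Finset.range n, (w (k + 1) - w k) * b (n - 1 - k) := by
  have h1 : ∑ k ∈ Finset.range n, w (k+1) * b (n - 1 - k)
      = ∑ k ∈ Finset.Ico 1 (n+1), w k * b (n - k) := by
    rw [Finset.sum_Ico_eq_sum_range]
    simp only [Nat.add_sub_cancel]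
    apply Finset.sum_congr rfl
    intro i hi
    have : n - (1 + i) = n - 1 - i := by omega
    rw [this, add_comm 1 i]
  have h2 : ∑ k ∈ Finset.Ico 1 (n+1), w k * b (n - k)
      = (∑ k ∈ Finset.Ico 1 n, w k * b (n - k)) + w n * b 0 := by
    rw [Finset.sum_Ico_succ_top hn]
    simp
  have h3 : ∑ k ∈ Finset.range n, w k * b (n - 1 - k)
      = w 0 * b (n-1) + ∑ k ∈ Finset.Ico 1 n, w k * b (n - 1 - k) := by
    rw [Finset.range_eq_Ico, Finset.sum_eq_sum_Ico_succ_bot (by omega)]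
    simp
  have h4 : ∀ k ∈ Finset.Ico 1 n, b (n-k-1) * w k = w k * b (n-1-k) := by
    intro k hk
    have : n - k - 1 = n - 1 - k := by omega
    rw [this]; ring
  simp only [sub_mul]
  rw [Finset.sum_sub_distrib, Finset.sum_sub_distrib, h1, h2, h3,
    Finset.sum_congr rfl h4]
  have h5 : ∀ k ∈ Finset.Ico 1 n, b (n-k) * w k = w k * b (n-k) := fun k _ => mul_comm _ _
  rw [Finset.sum_congr rfl h5]
  ring

lemma rpow_diff_le {α : ℝ} (hα0 : 0 < α) (hα1 : α < 1) {x : ℝ} (hx : 0 < x) :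
    (x + 1) ^ (1 - α) - x ^ (1 - α) ≤ (1 - α) * x ^ (-α) := by
  have hconv : Convex ℝ (Set.Icc x (x+1)) := convex_Icc _ _
  have hd : ∀ y ∈ Set.Icc x (x+1), HasDerivWithinAt (fun y : ℝ => y ^ (1-α))
      ((1-α) * y ^ (-α)) (Set.Icc x (x+1)) y := by
    intro y hy
    have hy0 : y ≠ 0 := by nlinarith [hy.1]
    have := (Real.hasDerivAt_rpow_const (p := 1-α) (Or.inl hy0))
    have h2 : 1 - α - 1 = -α := by ring
    rw [h2] at this
    exact this.hasDerivWithinAt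
  have hbound : ∀ y ∈ Set.Icc x (x+1), ‖(1-α) * y ^ (-α)‖ ≤ (1-α) * x ^ (-α) := by
    intro y hy
    have hy0 : 0 < y := lt_of_lt_of_le hx hy.1
    have h1 : y ^ (-α) ≤ x ^ (-α) :=
      Real.rpow_le_rpow_of_nonpos hx hy.1 (by linarith)
    have h2 : (0:ℝ) ≤ y ^ (-α) := Real.rpow_nonneg hy0.le _
    rw [Real.norm_eq_abs, abs_mul, abs_of_nonneg (by linarith : (0:ℝ) ≤ 1-α),
      abs_of_nonneg h2]
    exact mul_le_mul_of_nonneg_left h1 (by linarith)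
  have := hconv.norm_image_sub_le_of_norm_hasDerivWithin_le hd hbound
    (Set.left_mem_Icc.2 (by linarith)) (Set.right_mem_Icc.2 (by linarith))
  rw [Real.norm_eq_abs] at this
  calc (x+1) ^ (1-α) - x ^ (1-α) ≤ |(x+1) ^ (1-α) - x ^ (1-α)| := le_abs_self _
    _ ≤ (1-α) * x ^ (-α) * ‖x + 1 - x‖ := this
    _ = (1-α) * x ^ (-α) := by simp

lemma kernel_integral {α : ℝ} (hα1 : α < 1) (t a b : ℝ) :
    (∫ s in a..b, (t - s) ^ (-α)) = ((t-a) ^ (1-α) - (t-b) ^ (1-α)) / (1-α) := by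
  rw [intervalIntegral.integral_comp_sub_left (fun u : ℝ => u ^ (-α)) t]
  rw [integral_rpow (Or.inl (by linarith))]
  have : -α + 1 = 1 - α := by ring
  rw [this]

lemma kernel_integrable {α : ℝ} (hα1 : α < 1) (t a b : ℝ) :
    IntervalIntegrable (fun s => (t - s) ^ (-α)) MeasureTheory.volume a b := by
  have h : IntervalIntegrable (fun u : ℝ => u ^ (-α)) MeasureTheory.volume (t - a) (t - b) :=
    intervalIntegrable_rpow' (by linarith)
  simpa using h.comp_sub_left t

lemma Bsum_le {α : ℝ} (hα0 : 0 < α) (hα1 : α < 1) (n : ℕ) (hn : 1 ≤ n) :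
    ∑ j ∈ Finset.range n,
      ((((j:ℝ)+1) ^ (1-α) - (j:ℝ) ^ (1-α)) / (1-α) - ((j:ℝ)+1) ^ (-α)) ≤ 1 / (1-α) := by
  have h1α : (0:ℝ) < 1 - α := by linarith
  rw [Finset.range_eq_Ico, Finset.sum_eq_sum_Ico_succ_bot (by omega : 0 < n)]
  have h0 : (((0:ℕ):ℝ)+1) ^ (1-α) - ((0:ℕ):ℝ) ^ (1-α) = 1 := by
    simp [Real.zero_rpow (by linarith : 1 - α ≠ 0)]
  have hterm : ∀ j ∈ Finset.Ico 1 n,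
      ((((j:ℝ)+1) ^ (1-α) - (j:ℝ) ^ (1-α)) / (1-α) - ((j:ℝ)+1) ^ (-α))
        ≤ (j:ℝ) ^ (-α) - ((j:ℝ)+1) ^ (-α) := by
    intro j hj
    have hj1 : (0:ℝ) < j := by
      have := (Finset.mem_Ico.1 hj).1; positivity
    have := rpow_diff_le hα0 hα1 hj1
    have h2 : (((j:ℝ)+1) ^ (1-α) - (j:ℝ) ^ (1-α)) / (1-α) ≤ (j:ℝ) ^ (-α) := by
      rw [div_le_iff₀ h1α]; linarith
    linarith
  have htel : ∑ j ∈ Finset.Ico 1 n, ((j:ℝ) ^ (-α) - ((j:ℝ)+1) ^ (-α)) = 1 - (n:ℝ) ^ (-α) := by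
    rw [Finset.sum_Ico_eq_sum_range]
    have : ∀ i, ((1+i : ℕ):ℝ) ^ (-α) - (((1+i:ℕ):ℝ)+1) ^ (-α)
        = (fun k : ℕ => ((1+k : ℕ):ℝ) ^ (-α)) i - (fun k : ℕ => ((1+k : ℕ):ℝ) ^ (-α)) (i+1) := by
      intro i; simp only; norm_num [Nat.cast_add]; ring_nf
    rw [Finset.sum_congr rfl (fun i _ => this i), Finset.sum_range_sub']
    have hc : ((1 + (n-1) : ℕ):ℝ) = (n:ℝ) := by
      have : 1 + (n-1) = n := by omega
      rw [this]
    rw [hc]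
    norm_num
  have hs := Finset.sum_le_sum hterm
  have hn0 : (0:ℝ) ≤ (n:ℝ) ^ (-α) := Real.rpow_nonneg (by positivity) _
  have hkey : ∑ j ∈ Finset.Ico 1 n,
      ((((j:ℝ)+1) ^ (1-α) - (j:ℝ) ^ (1-α)) / (1-α) - ((j:ℝ)+1) ^ (-α)) ≤ 1 := by
    rw [htel] at hs; linarith
  rw [h0]
  have h01 : ((((0:ℕ):ℝ)+1) ^ (-α)) = 1 := by norm_num
  rw [h01]
  linarith

end Aux

/-- The L1 coefficients a_j^(α) = ((j+1)^{1-α} - j^{1-α})/Γ(2-α). -/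
noncomputable def aCoeff (α : ℝ) (j : ℕ) : ℝ :=
  (((j : ℝ) + 1) ^ (1 - α) - (j : ℝ) ^ (1 - α)) / Real.Gamma (2 - α)

/-- The L1 backward difference quotient δ_t^α applied to the grid values v^j = v(jτ). -/
noncomputable def deltaL1 (α τ : ℝ) (v : ℝ → ℝ) (n : ℕ) : ℝ :=
  τ ^ (-α) * (aCoeff α 0 * v ((n : ℝ) * τ)
    - (∑ k ∈ Finset.Ico 1 n, (aCoeff α (n - k - 1) - aCoeff α (n - k)) * v ((k : ℝ) * τ))
    - aCoeff α (n - 1) * v 0)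

/-- The Caputo fractional derivative of order α ∈ (0,1) at time t. -/
noncomputable def caputoAlpha (α : ℝ) (v : ℝ → ℝ) (t : ℝ) : ℝ :=
  (1 / Real.Gamma (1 - α)) * ∫ s in (0 : ℝ)..t, deriv v s * (t - s) ^ (-α)

set_option maxHeartbeats 2000000

/-- L1 approximation error, Lemma 2.1: there is c_α, depending only on α,
with |₀^C D_t^α v(t_n) - δ_t^α v^n| ≤ c_α · max_{[0,t_n]} |v''| · τ^{2-α}. -/
theorem L1_approximation_error (α : ℝ) (hα0 : 0 < α) (hα1 : α < 1) :
    ∃ c : ℝ, 0 < c ∧ ∀ (τ : ℝ), 0 < τ → ∀ (n : ℕ), 1 ≤ n → ∀ (v : ℝ → ℝ),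
      ContDiffOn ℝ 2 v (Set.Icc 0 ((n : ℝ) * τ)) →
      ∀ M : ℝ, (∀ t ∈ Set.Icc (0 : ℝ) ((n : ℝ) * τ), |deriv (deriv v) t| ≤ M) →
        |caputoAlpha α v ((n : ℝ) * τ) - deltaL1 α τ v n| ≤ c * M * τ ^ (2 - α) := by
  have h1α : (0:ℝ) < 1 - α := by linarith
  have hΓ1 : 0 < Real.Gamma (1 - α) := Real.Gamma_pos_of_pos h1α
  have hΓ2 : 0 < Real.Gamma (2 - α) := Real.Gamma_pos_of_pos (by linarith)
  have hΓeq : Real.Gamma (2 - α) = (1 - α) * Real.Gamma (1 - α) := by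
    have h : (2:ℝ) - α = (1 - α) + 1 := by ring
    rw [h, Real.Gamma_add_one (by linarith : (1:ℝ) - α ≠ 0)]
  refine ⟨1 / Real.Gamma (2 - α), by positivity, ?_⟩
  intro τ hτ n hn v hv M hM
  set t : ℝ := (n : ℝ) * τ with ht_def
  have hnR : (1:ℝ) ≤ (n:ℝ) := by exact_mod_cast hn
  have ht : 0 < t := by rw [ht_def]; nlinarith
  have hM0 : 0 ≤ M := le_trans (abs_nonneg _) (hM 0 ⟨le_refl 0, ht.le⟩)
  -- derivative infrastructure
  have hvc : ContinuousOn v (Set.Icc 0 t) := hv.continuousOn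
  have hdiffv : ∀ x ∈ Set.Ioo (0:ℝ) t, DifferentiableAt ℝ v x := by
    intro x hx
    have h1 : DifferentiableWithinAt ℝ v (Set.Icc 0 t) x :=
      (hv.differentiableOn (by norm_num)) x (Set.mem_Icc_of_Ioo hx)
    exact h1.differentiableAt (Icc_mem_nhds hx.1 hx.2)
  have hgc : ContDiffOn ℝ 1 (derivWithin v (Set.Icc 0 t)) (Set.Icc 0 t) :=
    hv.derivWithin (uniqueDiffOn_Icc ht) (by norm_num)
  have hEq : Set.EqOn (deriv v) (derivWithin v (Set.Icc 0 t)) (Set.Ioo 0 t) := by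
    intro x hx
    exact ((hdiffv x hx).derivWithin ((uniqueDiffOn_Icc ht) x (Set.mem_Icc_of_Ioo hx))).symm
  have hd2 : ∀ x ∈ Set.Ioo (0:ℝ) t, DifferentiableAt ℝ (deriv v) x := by
    intro x hx
    have h1 : DifferentiableWithinAt ℝ (derivWithin v (Set.Icc 0 t)) (Set.Icc 0 t) x :=
      (hgc.differentiableOn (by norm_num)) x (Set.mem_Icc_of_Ioo hx)
    have h2 : DifferentiableAt ℝ (derivWithin v (Set.Icc 0 t)) x :=
      h1.differentiableAt (Icc_mem_nhds hx.1 hx.2)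
    have h3 : deriv v =ᶠ[nhds x] derivWithin v (Set.Icc 0 t) :=
      Filter.eventuallyEq_of_mem (Ioo_mem_nhds hx.1 hx.2) hEq
    exact h3.differentiableAt_iff.2 h2
  have hlip : ∀ x ∈ Set.Ioo (0:ℝ) t, ∀ y ∈ Set.Ioo (0:ℝ) t,
      |deriv v y - deriv v x| ≤ M * |y - x| := by
    intro x hx y hy
    have := (convex_Ioo (0:ℝ) t).norm_image_sub_le_of_norm_hasDerivWithin_le
      (f := deriv v) (f' := deriv (deriv v)) (C := M)
      (fun z hz => ((hd2 z hz).hasDerivAt).hasDerivWithinAt)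
      (fun z hz => by rw [Real.norm_eq_abs]; exact hM z (Set.mem_Icc_of_Ioo hz)) hx hy
    simpa [Real.norm_eq_abs] using this
  have hmid : t/2 ∈ Set.Ioo (0:ℝ) t := ⟨by linarith, by linarith⟩
  set K : ℝ := |deriv v (t/2)| + M * t with hK_def
  have hK : ∀ x ∈ Set.Ioo (0:ℝ) t, |deriv v x| ≤ K := by
    intro x hx
    have h1 := hlip (t/2) hmid x hx
    have h2 : |x - t/2| ≤ t := by
      rw [abs_le]; constructor <;> [linarith [hx.1, hx.2]; linarith [hx.1, hx.2]]
    have h3 : |deriv v x| ≤ |deriv v (t/2)| + |deriv v x - deriv v (t/2)| := by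
      have := abs_add_le (deriv v (t/2)) (deriv v x - deriv v (t/2))
      simpa using this
    have h4 : M * |x - t/2| ≤ M * t := mul_le_mul_of_nonneg_left h2 hM0
    rw [hK_def]; linarith
  have hK0 : 0 ≤ K := by
    have := abs_nonneg (deriv v (t/2))
    rw [hK_def]; nlinarith
  -- a.e. membership in the open interval
  have hae : ∀ a b : ℝ, a < b →
      ∀ᵐ s ∂(MeasureTheory.volume.restrict (Set.uIoc a b)), s ∈ Set.Ioo a b := by
    intro a b hab
    rw [Set.uIoc_of_le hab.le]
    have hne : ∀ᵐ s ∂(MeasureTheory.volume : MeasureTheory.Measure ℝ), s ≠ b := by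
      rw [MeasureTheory.ae_iff]
      have : {s : ℝ | ¬ s ≠ b} = {b} := by ext y; simp
      rw [this]
      exact Real.volume_singleton
    filter_upwards [MeasureTheory.ae_restrict_mem measurableSet_Ioc,
      MeasureTheory.ae_restrict_of_ae hne] with s hs hsb
    exact ⟨hs.1, lt_of_le_of_ne hs.2 hsb⟩
  -- interval integrability
  have hωint : ∀ a b : ℝ, IntervalIntegrable (fun s => (t - s) ^ (-α))
      MeasureTheory.volume a b := fun a b => kernel_integrable hα1 t a b
  have hωnonneg : ∀ s : ℝ, s ≤ t → 0 ≤ (t - s) ^ (-α) :=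
    fun s h => Real.rpow_nonneg (by linarith) _
  have hmeasd : ∀ a b : ℝ, MeasureTheory.AEStronglyMeasurable (deriv v)
      (MeasureTheory.volume.restrict (Set.uIoc a b)) := fun a b =>
    (stronglyMeasurable_deriv v).aestronglyMeasurable.restrict
  have hint2 : ∀ a b : ℝ, 0 ≤ a → a < b → b ≤ t →
      IntervalIntegrable (deriv v) MeasureTheory.volume a b := by
    intro a b ha hab hb
    apply IntervalIntegrable.mono_fun' (g := fun _ => K) intervalIntegrable_const (hmeasd a b)
    filter_upwards [hae a b hab] with s hs
    exact hK s ⟨lt_of_le_of_lt ha hs.1, lt_of_lt_of_le hs.2 hb⟩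
  have hint1 : ∀ a b : ℝ, 0 ≤ a → a < b → b ≤ t →
      IntervalIntegrable (fun s => deriv v s * (t - s) ^ (-α)) MeasureTheory.volume a b := by
    intro a b ha hab hb
    apply IntervalIntegrable.mono_fun' (g := fun s => K * (t - s) ^ (-α))
      ((hωint a b).const_mul K)
    · apply (hmeasd a b).mul
      rw [Set.uIoc_of_le hab.le,
        ← MeasureTheory.Measure.restrict_congr_set MeasureTheory.Ioo_ae_eq_Ioc]
      apply ContinuousOn.aestronglyMeasurable _ measurableSet_Ioo
      apply ContinuousOn.rpow_const ((continuous_const.sub continuous_id).continuousOn)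
      intro x hx
      exact Or.inl (by nlinarith [hx.2] : (0:ℝ) < t - x).ne'
    · filter_upwards [hae a b hab] with s hs
      have hst : s ≤ t := le_of_lt (lt_of_lt_of_le hs.2 hb)
      rw [Real.norm_eq_abs, abs_mul, abs_of_nonneg (hωnonneg s hst)]
      exact mul_le_mul_of_nonneg_right
        (hK s ⟨lt_of_le_of_lt ha hs.1, lt_of_lt_of_le hs.2 hb⟩) (hωnonneg s hst)
  -- FTC
  have hftc : ∀ a b : ℝ, 0 ≤ a → a < b → b ≤ t →
      (∫ s in a..b, deriv v s) = v b - v a := by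
    intro a b ha hab hb
    apply intervalIntegral.integral_eq_sub_of_hasDerivAt_of_le hab.le
      (hvc.mono (Set.Icc_subset_Icc ha hb))
      (fun x hx => (hdiffv x ⟨lt_of_le_of_lt ha hx.1, lt_of_lt_of_le hx.2 hb⟩).hasDerivAt)
      (hint2 a b ha hab hb)
  -- per-interval estimate
  have step : ∀ a b : ℝ, 0 ≤ a → a < b → b ≤ t → b - a = τ →
      |(∫ s in a..b, deriv v s * (t - s) ^ (-α))
          - ((v b - v a)/τ) * (∫ s in a..b, (t - s) ^ (-α))|
        ≤ M * τ * ((∫ s in a..b, (t - s) ^ (-α)) - τ * (t - a) ^ (-α)) := by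
    intro a b ha hab hb hba
    obtain ⟨ξ, hξ, hslope⟩ := exists_hasDerivAt_eq_slope v (deriv v) hab
      (hvc.mono (Set.Icc_subset_Icc ha hb))
      (fun x hx => (hdiffv x ⟨lt_of_le_of_lt ha hx.1, lt_of_lt_of_le hx.2 hb⟩).hasDerivAt)
    set d : ℝ := (v b - v a)/τ with hd_def
    have hdξ : deriv v ξ = d := by rw [hslope, hba]
    have hI1 := hint1 a b ha hab hb
    have hI2 := hint2 a b ha hab hb
    have hI3 := hωint a b
    have hidentity : (∫ s in a..b, deriv v s * (t - s) ^ (-α))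
          - d * (∫ s in a..b, (t - s) ^ (-α))
        = ∫ s in a..b, (deriv v s - d) * ((t - s) ^ (-α) - (t - a) ^ (-α)) := by
      have e1 : (fun s => (deriv v s - d) * ((t - s) ^ (-α) - (t - a) ^ (-α)))
          = fun s => (deriv v s * (t - s) ^ (-α) - d * (t - s) ^ (-α)
              - deriv v s * (t - a) ^ (-α)) + d * (t - a) ^ (-α) := by
        funext s; ring
      have hvab : v b - v a = d * τ := by
        rw [hd_def]; field_simp
      rw [e1, intervalIntegral.integral_add
          (((hI1.sub (hI3.const_mul d)).sub (hI2.mul_const ((t - a) ^ (-α)))))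
          intervalIntegrable_const,
        intervalIntegral.integral_sub (hI1.sub (hI3.const_mul d))
          (hI2.mul_const ((t - a) ^ (-α))),
        intervalIntegral.integral_sub hI1 (hI3.const_mul d),
        intervalIntegral.integral_const_mul, intervalIntegral.integral_mul_const,
        intervalIntegral.integral_const, hftc a b ha hab hb, hvab, smul_eq_mul, hba]
      ring
    rw [hidentity]
    have hbound : ∀ᵐ s ∂(MeasureTheory.volume.restrict (Set.uIoc a b)),
        ‖(deriv v s - d) * ((t - s) ^ (-α) - (t - a) ^ (-α))‖
          ≤ M * τ * ((t - s) ^ (-α) - (t - a) ^ (-α)) := by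
      filter_upwards [hae a b hab] with s hs
      have hs0 : s ∈ Set.Ioo (0:ℝ) t := ⟨lt_of_le_of_lt ha hs.1, lt_of_lt_of_le hs.2 hb⟩
      have hξ0 : ξ ∈ Set.Ioo (0:ℝ) t := ⟨lt_of_le_of_lt ha hξ.1, lt_of_lt_of_le hξ.2 hb⟩
      have h1 : |deriv v s - d| ≤ M * τ := by
        rw [← hdξ]
        calc |deriv v s - deriv v ξ| ≤ M * |s - ξ| := hlip ξ hξ0 s hs0
          _ ≤ M * τ := by
            apply mul_le_mul_of_nonneg_left _ hM0
            rw [abs_le]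
            constructor <;> [linarith [hs.1, hs.2, hξ.1, hξ.2]; linarith [hs.1, hs.2, hξ.1, hξ.2]]
      have h2 : (t - a) ^ (-α) ≤ (t - s) ^ (-α) :=
        Real.rpow_le_rpow_of_nonpos (by linarith [hs0.2] : (0:ℝ) < t - s)
          (by linarith [hs.1] : t - s ≤ t - a) (by linarith)
      rw [Real.norm_eq_abs, abs_mul, abs_of_nonneg (by linarith : (0:ℝ) ≤ (t-s)^(-α) - (t-a)^(-α))]
      exact mul_le_mul_of_nonneg_right h1 (by linarith)
    have hgint : IntervalIntegrable
        (fun s => M * τ * ((t - s) ^ (-α) - (t - a) ^ (-α))) MeasureTheory.volume a b :=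
      ((hI3.sub intervalIntegrable_const).const_mul (M * τ))
    have hmain := intervalIntegral.norm_integral_le_abs_of_norm_le hbound hgint
    have hgval : (∫ s in a..b, M * τ * ((t - s) ^ (-α) - (t - a) ^ (-α)))
        = M * τ * ((∫ s in a..b, (t - s) ^ (-α)) - τ * (t - a) ^ (-α)) := by
      rw [intervalIntegral.integral_const_mul,
        intervalIntegral.integral_sub hI3 intervalIntegrable_const,
        intervalIntegral.integral_const, smul_eq_mul, hba]
    have hgnn : 0 ≤ ∫ s in a..b, M * τ * ((t - s) ^ (-α) - (t - a) ^ (-α)) := by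
      apply intervalIntegral.integral_nonneg_of_ae_restrict hab.le
      rw [Filter.EventuallyLE,
        ← MeasureTheory.Measure.restrict_congr_set MeasureTheory.Ioo_ae_eq_Icc,
        MeasureTheory.ae_restrict_iff' measurableSet_Ioo]
      apply MeasureTheory.ae_of_all
      intro s hs
      have h2 : (t - a) ^ (-α) ≤ (t - s) ^ (-α) :=
        Real.rpow_le_rpow_of_nonpos (by nlinarith [hs.2, hb] : (0:ℝ) < t - s)
          (by nlinarith [hs.1] : t - s ≤ t - a) (by linarith)
      have hMτ : (0:ℝ) ≤ M * τ := by positivity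
      simp only [Pi.zero_apply]
      exact mul_nonneg hMτ (by linarith)
    rw [Real.norm_eq_abs] at hmain
    rw [abs_of_nonneg hgnn, hgval] at hmain
    exact hmain
  -- final assembly
  set w : ℕ → ℝ := fun k => v ((k:ℝ) * τ) with hw_def
  set B : ℕ → ℝ :=
    fun j => ((((j:ℝ)+1) ^ (1-α) - (j:ℝ) ^ (1-α)) / (1-α) - ((j:ℝ)+1) ^ (-α)) with hB_def
  have hτpow1 : τ ^ (1-α) = τ * τ ^ (-α) := by
    rw [show (1:ℝ) - α = 1 + (-α) by ring, Real.rpow_add hτ, Real.rpow_one]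
  have hτpow2 : τ ^ (2-α) = τ * τ ^ (1-α) := by
    rw [show (2:ℝ) - α = 1 + (1-α) by ring, Real.rpow_add hτ, Real.rpow_one]
  have hdelta : deltaL1 α τ v n
      = τ ^ (-α) * ∑ k ∈ Finset.range n, (w (k+1) - w k) * aCoeff α (n-1-k) := by
    rw [deltaL1, ← abel_id n hn w (aCoeff α)]
    simp only [hw_def]
    norm_num
  have hterm : ∀ k ∈ Finset.range n,
      |(1/Real.Gamma (1-α)) * (∫ s in ((k:ℝ)*τ)..(((k:ℝ)+1)*τ), deriv v s * (t - s)^(-α))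
          - τ^(-α) * ((w (k+1) - w k) * aCoeff α (n-1-k))|
        ≤ (M * τ^(2-α) / Real.Gamma (1-α)) * B (n-1-k) := by
    intro k hk'
    have hk : k < n := Finset.mem_range.1 hk'
    set a : ℝ := (k:ℝ)*τ with ha_def
    set b : ℝ := ((k:ℝ)+1)*τ with hb_def
    have hb' : b = a + τ := by rw [hb_def, ha_def]; ring
    have ha0 : 0 ≤ a := by rw [ha_def]; positivity
    have hab : a < b := by rw [hb']; linarith
    have hkn : (k:ℝ) + 1 ≤ (n:ℝ) := by exact_mod_cast hk
    have hbt : b ≤ t := by rw [hb', ha_def, ht_def]; nlinarith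
    have hba : b - a = τ := by rw [hb']; ring
    set j : ℕ := n - 1 - k with hj_def
    have hjR : (j:ℝ) = (n:ℝ) - 1 - (k:ℝ) := by
      rw [hj_def]
      have h1 : n - 1 - k = n - (1 + k) := by omega
      rw [h1, Nat.cast_sub (by omega)]
      push_cast; ring
    have hta : t - a = ((j:ℝ)+1)*τ := by rw [ht_def, ha_def, hjR]; ring
    have htb : t - b = (j:ℝ)*τ := by rw [ht_def, hb', ha_def, hjR]; ring
    have hj0 : (0:ℝ) ≤ (j:ℝ) := Nat.cast_nonneg j
    have hIω : (∫ s in a..b, (t - s)^(-α))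
        = (((j:ℝ)+1)^(1-α) - (j:ℝ)^(1-α)) * τ^(1-α) / (1-α) := by
      rw [kernel_integral hα1 t a b, hta, htb,
        Real.mul_rpow (by positivity) hτ.le, Real.mul_rpow hj0 hτ.le]
      ring
    have hωa : (t - a)^(-α) = ((j:ℝ)+1)^(-α) * τ^(-α) := by
      rw [hta, Real.mul_rpow (by positivity) hτ.le]
    have hstep := step a b ha0 hab hbt hba
    have hwk1 : w (k+1) = v b := by
      have hcast : ((k+1:ℕ):ℝ) * τ = b := by rw [hb_def]; push_cast; ring
      simp only [hw_def]
      rw [hcast]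
    have hwk : w k = v a := by simp only [hw_def, ha_def]
    have hcoef : τ^(-α) * ((w (k+1) - w k) * aCoeff α j)
        = (1/Real.Gamma (1-α)) * (((v b - v a)/τ) * (∫ s in a..b, (t - s)^(-α))) := by
      rw [hIω, aCoeff, hΓeq, hwk1, hwk, hτpow1]
      field_simp
    have hEmain : (1/Real.Gamma (1-α)) * (∫ s in a..b, deriv v s * (t-s)^(-α))
          - τ^(-α) * ((w (k+1) - w k) * aCoeff α j)
        = (1/Real.Gamma (1-α)) * ((∫ s in a..b, deriv v s * (t-s)^(-α))
            - ((v b - v a)/τ) * (∫ s in a..b, (t-s)^(-α))) := by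
      rw [hcoef]; ring
    have hRHS : M * τ * ((∫ s in a..b, (t - s)^(-α)) - τ * (t-a)^(-α))
        = (M * τ^(2-α) / Real.Gamma (1-α)) * B j * Real.Gamma (1-α) := by
      rw [hIω, hωa, hB_def, hτpow2, hτpow1]
      field_simp
    rw [hEmain, abs_mul, abs_of_nonneg (by positivity : (0:ℝ) ≤ 1/Real.Gamma (1-α))]
    calc (1/Real.Gamma (1-α)) * |(∫ s in a..b, deriv v s * (t-s)^(-α))
            - ((v b - v a)/τ) * (∫ s in a..b, (t-s)^(-α))|
        ≤ (1/Real.Gamma (1-α)) * (M * τ * ((∫ s in a..b, (t - s)^(-α)) - τ * (t-a)^(-α))) :=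
          mul_le_mul_of_nonneg_left hstep (by positivity)
      _ = (M * τ^(2-α) / Real.Gamma (1-α)) * B j := by
          rw [hRHS]; field_simp
  have hadj : ∀ k, k < n → IntervalIntegrable (fun s => deriv v s * (t - s)^(-α))
      MeasureTheory.volume ((k:ℝ)*τ) ((((k+1):ℕ):ℝ)*τ) := by
    intro k hk
    have hkn : (k:ℝ) + 1 ≤ (n:ℝ) := by exact_mod_cast hk
    apply hint1
    · positivity
    · push_cast; nlinarith
    · push_cast; rw [ht_def]; nlinarith
  have hsplit := intervalIntegral.sum_integral_adjacent_intervals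
      (μ := MeasureTheory.volume) (f := fun s => deriv v s * (t - s)^(-α))
      (a := fun k : ℕ => (k:ℝ)*τ) (n := n) hadj
  norm_num at hsplit
  have hcap : caputoAlpha α v t
      = ∑ k ∈ Finset.range n, (1/Real.Gamma (1-α))
          * ∫ s in ((k:ℝ)*τ)..(((k:ℝ)+1)*τ), deriv v s * (t - s)^(-α) := by
    rw [caputoAlpha, ← hsplit, Finset.mul_sum]
  rw [hcap, hdelta, Finset.mul_sum, ← Finset.sum_sub_distrib]
  calc |∑ k ∈ Finset.range n, ((1/Real.Gamma (1-α))
          * (∫ s in ((k:ℝ)*τ)..(((k:ℝ)+1)*τ), deriv v s * (t - s)^(-α))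
          - τ^(-α) * ((w (k+1) - w k) * aCoeff α (n-1-k)))|
      ≤ ∑ k ∈ Finset.range n, |(1/Real.Gamma (1-α))
          * (∫ s in ((k:ℝ)*τ)..(((k:ℝ)+1)*τ), deriv v s * (t - s)^(-α))
          - τ^(-α) * ((w (k+1) - w k) * aCoeff α (n-1-k))| :=
        Finset.abs_sum_le_sum_abs _ _
    _ ≤ ∑ k ∈ Finset.range n, (M * τ^(2-α) / Real.Gamma (1-α)) * B (n-1-k) :=
        Finset.sum_le_sum hterm
    _ = (M * τ^(2-α) / Real.Gamma (1-α)) * ∑ j ∈ Finset.range n, B j := by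
        rw [← Finset.mul_sum, Finset.sum_range_reflect]
    _ ≤ (M * τ^(2-α) / Real.Gamma (1-α)) * (1/(1-α)) := by
        apply mul_le_mul_of_nonneg_left _ (by positivity)
        rw [hB_def]
        exact Bsum_le hα0 hα1 n hn
    _ = 1/Real.Gamma (2-α) * M * τ^(2-α) := by
        rw [hΓeq]
        field_simp
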